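/- Let φ : [0,∞) → ℝ be continuous and nondecreasing with φ(0) = 0. If Σ_{i∈I, j≥0} m_{i,j} φ(2^{−j}) = ∞ and r^d = o(φ(r)) as r → 0, then with probability one the set L_{φ^{1/d}} = {x ∈ 𝕋^d : 𝔡(x, x_λ) < φ(2^{−⟨λ⟩})^{1/d} for infinitely many (i,λ) ∈ M} has full Lebesgue (Haar) measure in 𝕋^d. -/

import Mathlib

open MeasureTheory Filter Set Topology
open scoped ENNReal NNReal Classical

noncomputable section

namespace WaveletFractal

/-! ### Gauge functions -/

/-- The class `𝔇` of gauge functions. -/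
def IsGauge (g : ℝ → ℝ) : Prop :=
  g 0 = 0 ∧ Tendsto g (𝓝[>] (0:ℝ)) (𝓝 0) ∧ ∃ ε > 0, MonotoneOn g (Icc (0:ℝ) ε)

/-- The class `𝔇_d`: gauge functions such that `r ↦ g r / r^d` is positive and
nonincreasing near `0`. -/
def IsGaugeD (d : ℕ) (g : ℝ → ℝ) : Prop :=
  IsGauge g ∧ ∃ ε > 0, (∀ r ∈ Ioc (0:ℝ) ε, 0 < g r / r ^ d) ∧
    AntitoneOn (fun r => g r / r ^ d) (Ioc (0:ℝ) ε)

/-- The gauge function `g_d : r ↦ r^d * inf_{0 < ρ ≤ r} g ρ / ρ^d`. -/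
def gD (d : ℕ) (g : ℝ → ℝ) : ℝ → ℝ :=
  fun r => r ^ d * sInf ((fun ρ => g ρ / ρ ^ d) '' Ioc (0:ℝ) r)

/-- `GaugePrec gb g` means `gb ≺ g`: `gb/g` tends monotonically to infinity at `0`. -/
def GaugePrec (gb g : ℝ → ℝ) : Prop :=
  ∃ ε > 0, AntitoneOn (fun r => gb r / g r) (Ioc (0:ℝ) ε) ∧
    Tendsto (fun r => gb r / g r) (𝓝[>] (0:ℝ)) atTop

/-- Membership in the class `𝒟`: `log (g₁ r) / log r` has a limit as `r → 0⁺`. -/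
def MemD (g : ℝ → ℝ) : Prop :=
  ∃ γ : ℝ, Tendsto (fun r => Real.log (gD 1 g r) / Real.log r) (𝓝[>] (0:ℝ)) (𝓝 γ)

/-- The class `𝒟₁ = 𝒟 ∩ 𝔇₁`. -/
def MemD1 (g : ℝ → ℝ) : Prop := MemD g ∧ IsGaugeD 1 g

/-- The Hausdorff `g`-measure associated with a gauge function `g`. -/
def hausdorffGauge {X : Type*} [EMetricSpace X] [MeasurableSpace X] [BorelSpace X]
    (g : ℝ → ℝ) : Measure X :=
  Measure.mkMetric (fun r => ENNReal.ofReal (g r.toReal))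

/-! ### Net measures and large intersection classes in `ℝ^d` and on the torus -/

/-- The `c`-adic cube `c^{-j}(k + [0,1)^d)` in `ℝ^d`. -/
def cadicCube (d c : ℕ) (j : ℤ) (k : Fin d → ℤ) : Set (Fin d → ℝ) :=
  {x | ∀ i, (k i : ℝ) * (c:ℝ) ^ (-j) ≤ x i ∧ x i < ((k i : ℝ) + 1) * (c:ℝ) ^ (-j)}

/-- `ε_g` for `g ∈ 𝔇_d`. -/
def epsGauge (d : ℕ) (g : ℝ → ℝ) : ℝ :=
  sSup {ε : ℝ | ε ∈ Ioc (0:ℝ) 1 ∧ MonotoneOn g (Icc 0 ε) ∧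
    AntitoneOn (fun r => g r / r ^ d) (Ioc 0 ε)}

/-- The set coded by an element of `Option (ℤ × (Fin d → ℤ))`. -/
def netSet (d c : ℕ) : Option (ℤ × (Fin d → ℤ)) → Set (Fin d → ℝ)
  | none => ∅
  | some (j, k) => cadicCube d c j k

/-- The weight `g (diam λ)` of a coded `c`-adic cube. -/
def netWeight (c : ℕ) (g : ℝ → ℝ) : Option (ℤ × (Fin d → ℤ)) → ℝ≥0∞
  | none => 0
  | some (j, _) => ENNReal.ofReal (g ((c:ℝ) ^ (-j)))

/-- The outer net measure `M^g_∞` in `ℝ^d`. -/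
def netMeasure (d c : ℕ) (g : ℝ → ℝ) (F : Set (Fin d → ℝ)) : ℝ≥0∞ :=
  ⨅ (f : ℕ → Option (ℤ × (Fin d → ℤ)))
    (_ : ∀ p j k, f p = some (j, k) → (c:ℝ) ^ (-j) < epsGauge d g)
    (_ : F ⊆ ⋃ p, netSet d c (f p)),
      ∑' p, netWeight c g (f p)

/-- The class `G^g(V)` of subsets of `ℝ^d` with large intersection in `V` with
respect to `g ∈ 𝔇_d`. -/
def largeIntersection (d : ℕ) (g : ℝ → ℝ) (V : Set (Fin d → ℝ)) :
    Set (Set (Fin d → ℝ)) :=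
  {F | IsGδ F ∧ ∀ gb : ℝ → ℝ, IsGaugeD d gb → GaugePrec gb g →
    ∀ U : Set (Fin d → ℝ), IsOpen U → U ⊆ V →
      netMeasure d 2 gb (F ∩ U) = netMeasure d 2 gb U}

/-- The `d`-dimensional torus `𝕋^d = ℝ^d/ℤ^d`. -/
abbrev Torus (d : ℕ) := Fin d → AddCircle (1:ℝ)

/-- The canonical surjection `φ : ℝ^d → 𝕋^d`. -/
def torusProj (d : ℕ) : (Fin d → ℝ) → Torus d := fun x i => (x i : AddCircle (1:ℝ))

/-- The class `G^g(V)` for `V ⊆ 𝕋^d`: membership is checked after pulling back by the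
canonical surjection. -/
def largeIntersectionT (d : ℕ) (g : ℝ → ℝ) (V : Set (Torus d)) : Set (Set (Torus d)) :=
  {F | torusProj d ⁻¹' F ∈ largeIntersection d g (torusProj d ⁻¹' V)}

/-! ### The random wavelet series -/

/-- The rescaled-translated wavelet `x ↦ 2^{dj/2} ψ(2^j x - k)`. -/
def waveletAt (d : ℕ) (ψ : (Fin d → ℝ) → ℝ) (j : ℤ) (k : Fin d → ℤ) :
    (Fin d → ℝ) → ℝ :=
  fun x => (2:ℝ) ^ ((d : ℝ) * (j : ℝ) / 2) * ψ (fun i => (2:ℝ) ^ j * x i - (k i : ℝ))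

/-- The wavelets `ψ^i`, `i ∈ I`, are in the Schwartz class and the family
`2^{dj/2} ψ^i(2^j · - k)` is an orthonormal basis of `L²(ℝ^d)`. -/
def IsWaveletBasis (d : ℕ) (ψ : Fin (2 ^ d - 1) → (Fin d → ℝ) → ℝ) : Prop :=
  (∀ i, ∃ Ψ : SchwartzMap (Fin d → ℝ) ℝ, ⇑Ψ = ψ i) ∧
  (∀ (i i' : Fin (2 ^ d - 1)) (j j' : ℤ) (k k' : Fin d → ℤ),
    ∫ x : Fin d → ℝ, waveletAt d (ψ i) j k x * waveletAt d (ψ i') j' k' x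
      = if i = i' ∧ j = j' ∧ k = k' then 1 else 0) ∧
  (∀ f : (Fin d → ℝ) → ℝ, MemLp f 2 (volume : Measure (Fin d → ℝ)) →
    (∀ (i : Fin (2 ^ d - 1)) (j : ℤ) (k : Fin d → ℤ),
      ∫ x : Fin d → ℝ, f x * waveletAt d (ψ i) j k x = 0) →
    f =ᵐ[(volume : Measure (Fin d → ℝ))] 0)

/-- The canonical representative in `[0,1)^d` of a point of the torus. -/
def torusRep (d : ℕ) (x : Torus d) : Fin d → ℝ :=
  fun i => ((AddCircle.equivIco (1:ℝ) 0 (x i)) : ℝ)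

/-- The periodized wavelet `Ψ^i_λ` on the torus, for `λ` the dyadic cube of generation
`j` indexed by `k`. -/
def periodizedWavelet (d : ℕ) (ψ : (Fin d → ℝ) → ℝ) (j : ℕ) (k : Fin d → ℤ) :
    Torus d → ℝ :=
  fun x => ∑' m : Fin d → ℤ,
    ψ (fun i => (2:ℝ) ^ (j:ℤ) * (torusRep d x i - (m i : ℝ)) - (k i : ℝ))

/-- `n ∈ 𝒩_i`. -/
def memN (d : ℕ) (m : Fin (2 ^ d - 1) → ℕ → ℕ) (i : Fin (2 ^ d - 1)) (n : ℕ) : Prop :=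
  ∃ j : ℕ, n < ∑ j' ∈ Finset.range (j + 1), m i j'

/-- The scale `j_{i,n}` associated with the `n`-th random point in direction `i`. -/
def scaleOf (d : ℕ) (m : Fin (2 ^ d - 1) → ℕ → ℕ) (i : Fin (2 ^ d - 1)) (n : ℕ) : ℕ :=
  sInf {j : ℕ | n < ∑ j' ∈ Finset.range (j + 1), m i j'}

/-- The index `k` of the dyadic cube of generation `j` containing a point of the torus. -/
def cubeIndex (d : ℕ) (j : ℕ) (x : Torus d) : Fin d → ℤ :=
  fun i => ⌊torusRep d x i * 2 ^ j⌋

/-- The random set `M` of indices `(i, λ)` (coded by `(i, j, k)`) of the nonvanishing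
wavelet coefficients. -/
def Mset {Ω : Type*} (d : ℕ) (m : Fin (2 ^ d - 1) → ℕ → ℕ)
    (XX : Fin (2 ^ d - 1) → ℕ → Ω → Torus d) (ω : Ω) :
    Set (Fin (2 ^ d - 1) × ℕ × (Fin d → ℤ)) :=
  {p | ∃ n : ℕ, memN d m p.1 n ∧ p.2.1 = scaleOf d m p.1 n ∧
    p.2.2 = cubeIndex d (scaleOf d m p.1 n) (XX p.1 n ω)}

/-- The base point `x_λ` of the dyadic cube of generation `j` indexed by `k`. -/
def cubeBase (d : ℕ) (j : ℕ) (k : Fin d → ℤ) : Torus d :=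
  torusProj d (fun i => (k i : ℝ) / 2 ^ j)

/-- The random wavelet series `R`. -/
def waveletSeries {Ω : Type*} (d : ℕ) (hb : ℝ) (ψ : Fin (2 ^ d - 1) → (Fin d → ℝ) → ℝ)
    (m : Fin (2 ^ d - 1) → ℕ → ℕ) (XX : Fin (2 ^ d - 1) → ℕ → Ω → Torus d) (ω : Ω) :
    Torus d → ℝ :=
  fun x => ∑' p : Fin (2 ^ d - 1) × ℕ × (Fin d → ℤ),
    if p ∈ Mset d m XX ω then
      (2:ℝ) ^ (-(hb * (p.2.1 : ℝ))) * periodizedWavelet d (ψ p.1) p.2.1 p.2.2 x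
    else 0

/-- The random points are independent and uniformly distributed on the torus, and there
are at most `2^{dj}` nonzero coefficients at scale `j` in each direction. -/
structure IsRandomCubeModel {Ω : Type*} [MeasurableSpace Ω] (d : ℕ) (P : Measure Ω)
    (m : Fin (2 ^ d - 1) → ℕ → ℕ) (XX : Fin (2 ^ d - 1) → ℕ → Ω → Torus d) : Prop where
  dpos : 0 < d
  isProb : IsProbabilityMeasure P
  mbound : ∀ i j, m i j ≤ 2 ^ (d * j)
  meas : ∀ i n, Measurable (XX i n)
  law : ∀ i n, P.map (XX i n) = (volume : Measure (Torus d))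
  indep : ProbabilityTheory.iIndepFun
    (fun (p : Fin (2 ^ d - 1) × ℕ) ω => XX p.1 p.2 ω) P

/-- The Hölder exponent of `f : 𝕋^d → ℝ` at `x`, with values in `[0,∞]`. -/
def holderExpT (d : ℕ) (f : Torus d → ℝ) (x : Torus d) : ℝ≥0∞ :=
  sSup {H : ℝ≥0∞ | ∃ h : ℝ, 0 < h ∧ H = ENNReal.ofReal h ∧
    ∃ c > 0, ∃ δ > 0, ∃ Pf : Torus d → ℝ,
      (∃ Qp : MvPolynomial (Fin d) ℝ, ∃ ρ > 0, ∀ y : Fin d → ℝ, ‖y‖ < ρ →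
        Pf (torusProj d y) = MvPolynomial.eval y Qp) ∧
      ∀ x' : Torus d, dist x' x ≤ δ → |f x' - Pf (x' - x)| ≤ c * dist x' x ^ h}

/-- The iso-Hölder set `E_h`. -/
def EsetT (d : ℕ) (f : Torus d → ℝ) (h : ℝ≥0∞) : Set (Torus d) :=
  {x | holderExpT d f x = h}

/-- The set `Ẽ_h = {x : h_R(x) ≤ h}`. -/
def tildeEsetT (d : ℕ) (f : Torus d → ℝ) (h : ℝ≥0∞) : Set (Torus d) :=
  {x | holderExpT d f x ≤ h}

/-- The set `L_φ` of points of the torus approximated at rate `φ` by the base points of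
the cubes indexing the nonvanishing wavelet coefficients. -/
def LsetT {Ω : Type*} (d : ℕ) (m : Fin (2 ^ d - 1) → ℕ → ℕ)
    (XX : Fin (2 ^ d - 1) → ℕ → Ω → Torus d) (ω : Ω) (φ : ℝ → ℝ) : Set (Torus d) :=
  {x | {p : Fin (2 ^ d - 1) × ℕ × (Fin d → ℤ) | p ∈ Mset d m XX ω ∧
    dist x (cubeBase d p.2.1 p.2.2) < φ ((2:ℝ) ^ (-(p.2.1 : ℤ)))}.Infinite}

/-- The exponent `h_g = inf {h > 0 : Σ_{i,j} m_{i,j} g_d(2^{-h̲j/h}) = ∞}`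
(with `inf ∅ = ∞`). -/
def hGaugeW (d : ℕ) (m : Fin (2 ^ d - 1) → ℕ → ℕ) (hb : ℝ) (g : ℝ → ℝ) : ℝ≥0∞ :=
  sInf {H : ℝ≥0∞ | ∃ h : ℝ, 0 < h ∧ H = ENNReal.ofReal h ∧
    ∑' p : Fin (2 ^ d - 1) × ℕ,
      (m p.1 p.2 : ℝ≥0∞) * ENNReal.ofReal (gD d g ((2:ℝ) ^ (-(hb * (p.2 : ℝ)) / h))) = ∞}

/-- The exponent `h̄ = h_{Id^d}`. -/
def hbarW (d : ℕ) (m : Fin (2 ^ d - 1) → ℕ → ℕ) (hb : ℝ) : ℝ≥0∞ :=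
  hGaugeW d m hb (fun r => r ^ d)

/-- The class `𝔚` of moduli of continuity. -/
def IsModulus (w : ℝ → ℝ) : Prop :=
  w 0 = 0 ∧ (∃ ε > 0, StrictMonoOn w (Icc (0:ℝ) ε) ∧ ContinuousOn w (Icc (0:ℝ) ε)) ∧
  (∃ c : ℝ, 1 < c ∧ ∀ᶠ δ in 𝓝[>] (0:ℝ), c * w δ ≤ w (2 * δ)) ∧
  (∃ C : ℝ, ∀ᶠ δ in 𝓝[>] (0:ℝ), w (2 * δ) ≤ C * w δ)

/-- The class `𝔚_{h̲}`: moduli of continuity with `w(δ) = o(δ^{h̲})` at `0`. -/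
def IsModulusO (hb : ℝ) (w : ℝ → ℝ) : Prop :=
  IsModulus w ∧ w =o[𝓝[>] (0:ℝ)] fun δ => δ ^ hb

/-- `w` is a modulus of continuity of `f : 𝕋^d → ℝ` at `x`. -/
def IsPtwiseModulusAtT (d : ℕ) (f : Torus d → ℝ) (w : ℝ → ℝ) (x : Torus d) : Prop :=
  ∃ c > 0, ∃ δ > 0, ∃ Pf : Torus d → ℝ,
    (∃ Qp : MvPolynomial (Fin d) ℝ, ∃ ρ > 0, ∀ y : Fin d → ℝ, ‖y‖ < ρ →
      Pf (torusProj d y) = MvPolynomial.eval y Qp) ∧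
    ∀ x' : Torus d, dist x' x ≤ δ → |f x' - Pf (x' - x)| ≤ c * w (dist x' x)

/-- `F_w`: the set of points at which `w` is not a modulus of continuity of `f`. -/
def badModulusSetT (d : ℕ) (f : Torus d → ℝ) (w : ℝ → ℝ) : Set (Torus d) :=
  {x | ¬ IsPtwiseModulusAtT d f w x}


variable {Ω : Type*} [MeasurableSpace Ω] {d : ℕ} {P : Measure Ω}
  {m : Fin (2 ^ d - 1) → ℕ → ℕ} {XX : Fin (2 ^ d - 1) → ℕ → Ω → Torus d}


/-! ### Auxiliary lemmas for the proof -/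

section AuxHelpers

lemma aux_coe_torusRep (d : ℕ) (x : Torus d) (i : Fin d) :
    ((torusRep d x i : ℝ) : AddCircle (1:ℝ)) = x i :=
  (AddCircle.equivIco (1:ℝ) 0).symm_apply_apply (x i)

lemma aux_dist_coe_le (s u : ℝ) :
    dist ((s : AddCircle (1:ℝ))) ((u : AddCircle (1:ℝ))) ≤ |s - u| := by
  rw [dist_eq_norm, ← AddCircle.coe_sub, ← Real.norm_eq_abs]
  exact QuotientAddGroup.norm_mk_le_norm

lemma aux_dist_cubeBase_le (d : ℕ) (j : ℕ) (y : Torus d) :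
    dist y (cubeBase d j (cubeIndex d j y)) ≤ (2:ℝ) ^ (-(j:ℤ)) := by
  rw [dist_pi_le_iff (by positivity)]
  intro i
  have h1 : y i = ((torusRep d y i : ℝ) : AddCircle (1:ℝ)) := (aux_coe_torusRep d y i).symm
  have h2 : cubeBase d j (cubeIndex d j y) i
      = (((⌊torusRep d y i * 2 ^ j⌋ : ℝ) / 2 ^ j : ℝ) : AddCircle (1:ℝ)) := rfl
  rw [h1, h2]
  refine (aux_dist_coe_le _ _).trans ?_
  set t := torusRep d y i
  have h2j : (0:ℝ) < 2 ^ j := by positivity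
  have hfr : t - (⌊t * 2 ^ j⌋ : ℝ) / 2 ^ j = (t * 2 ^ j - (⌊t * 2 ^ j⌋ : ℝ)) / 2 ^ j := by
    rw [sub_div, mul_div_cancel_right₀ _ (ne_of_gt h2j)]
  rw [hfr, abs_of_nonneg (div_nonneg (sub_nonneg.2 (Int.floor_le _)) h2j.le)]
  rw [zpow_neg, zpow_natCast]
  rw [div_le_iff₀ h2j, inv_mul_cancel₀ (ne_of_gt h2j)]
  have := Int.lt_floor_add_one (t * 2 ^ j)
  linarith

lemma aux_measurable_cubemap (d : ℕ) (j : ℕ) :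
    Measurable fun y : Torus d => cubeBase d j (cubeIndex d j y) := by
  apply measurable_pi_lambda
  intro i
  have h1 : Measurable fun y : Torus d => torusRep d y i :=
    measurable_subtype_coe.comp ((AddCircle.measurableEquivIco (T := 1) 0).measurable.comp
      (measurable_pi_apply i))
  have h2 : Measurable fun y : Torus d => ((⌊torusRep d y i * 2 ^ j⌋ : ℤ) : ℝ) / 2 ^ j := by
    apply Measurable.div_const
    exact (measurable_of_countable (fun z : ℤ => (z : ℝ))).comp (h1.mul_const _).floor
  exact (AddCircle.measurable_mk').comp h2

lemma aux_volume_event_ge (d : ℕ) (x : Torus d) (j : ℕ) (r : ℝ) (hr : 0 < r)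
    (h4 : (2:ℝ) ^ (-(j:ℤ)) ≤ r / 4) :
    ENNReal.ofReal (min 1 r) ^ d
      ≤ volume {y : Torus d | dist x (cubeBase d j (cubeIndex d j y)) < r} := by
  have hsub : Metric.closedBall x (r/2)
      ⊆ {y : Torus d | dist x (cubeBase d j (cubeIndex d j y)) < r} := by
    intro y hy
    have h1 : dist x (cubeBase d j (cubeIndex d j y))
        ≤ dist x y + dist y (cubeBase d j (cubeIndex d j y)) := dist_triangle _ _ _
    have h2 : dist x y ≤ r / 2 := Metric.mem_closedBall'.1 hy
    have h3 := aux_dist_cubeBase_le d j y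
    simp only [Set.mem_setOf_eq]
    linarith
  refine le_trans ?_ (measure_mono hsub)
  rw [closedBall_pi x (by positivity), volume_pi_pi]
  have hvol : ∀ i : Fin d, volume (Metric.closedBall (x i) (r/2)) = ENNReal.ofReal (min 1 r) := by
    intro i
    rw [AddCircle.volume_closedBall (T := 1) (r/2)]
    ring_nf
  simp [hvol]

lemma aux_littleo_extract (d : ℕ) (hd : 0 < d) (φ : ℝ → ℝ) (hφ0 : ∀ ρ : ℝ, 0 ≤ ρ → 0 ≤ φ ρ)
    (hlittle : (fun r : ℝ => r ^ d) =o[𝓝[>] (0:ℝ)] φ) :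
    ∃ J₀ : ℕ, ∀ j : ℕ, J₀ ≤ j →
      0 < φ ((2:ℝ)^(-(j:ℤ))) ∧
      (2:ℝ)^(-(j:ℤ)) ≤ φ ((2:ℝ)^(-(j:ℤ))) ^ (1/(d:ℝ)) / 4 ∧
      (φ ((2:ℝ)^(-(j:ℤ))) ^ (1/(d:ℝ))) ^ d = φ ((2:ℝ)^(-(j:ℤ))) := by
  have hc : (0:ℝ) < (4:ℝ)⁻¹ ^ d := by positivity
  have hev := hlittle.def hc
  have heq : (fun j : ℕ => (2:ℝ)^(-(j:ℤ))) = fun j : ℕ => (2⁻¹:ℝ)^j := by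
    funext j; rw [zpow_neg, zpow_natCast, inv_pow]
  have htend : Tendsto (fun j : ℕ => (2:ℝ)^(-(j:ℤ))) atTop (𝓝[>] (0:ℝ)) := by
    apply tendsto_nhdsWithin_of_tendsto_nhds_of_eventually_within
    · rw [heq]
      exact tendsto_pow_atTop_nhds_zero_of_lt_one (by norm_num) (by norm_num)
    · exact Filter.Eventually.of_forall fun j => Set.mem_Ioi.2 (by positivity)
  obtain ⟨J₀, hJ₀⟩ := (htend.eventually hev).exists_forall_of_atTop
  refine ⟨J₀, fun j hj => ?_⟩
  set ρ : ℝ := (2:ℝ)^(-(j:ℤ)) with hρdef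
  have hρpos : 0 < ρ := by positivity
  have h := hJ₀ j hj
  rw [Real.norm_eq_abs, Real.norm_eq_abs, abs_of_nonneg (by positivity),
    abs_of_nonneg (hφ0 ρ hρpos.le)] at h
  have hφpos : 0 < φ ρ := by
    rcases lt_or_eq_of_le (hφ0 ρ hρpos.le) with h' | h'
    · exact h'
    · exfalso
      rw [← h', mul_zero] at h
      have : (0:ℝ) < ρ ^ d := by positivity
      linarith
  set r : ℝ := φ ρ ^ (1/(d:ℝ)) with hrdef
  have hrpos : 0 < r := Real.rpow_pos_of_pos hφpos _
  have hrd : r ^ d = φ ρ := by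
    rw [hrdef, ← Real.rpow_natCast (φ ρ ^ (1/(d:ℝ))) d, ← Real.rpow_mul hφpos.le,
      one_div, inv_mul_cancel₀ (Nat.cast_ne_zero.2 hd.ne'), Real.rpow_one]
  refine ⟨hφpos, ?_, hrd⟩
  have hpow : ρ ^ d ≤ (r / 4) ^ d := by
    rw [div_pow]
    calc ρ ^ d ≤ (4:ℝ)⁻¹ ^ d * φ ρ := h
    _ = r ^ d / 4 ^ d := by rw [hrd, inv_pow]; ring
  exact (pow_le_pow_iff_left₀ hρpos.le (by positivity) hd.ne').1 hpow

lemma aux_min_one_ofReal (d : ℕ) (r : ℝ) (hr : 0 ≤ r) :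
    min 1 (ENNReal.ofReal (r ^ d)) = ENNReal.ofReal (min 1 r) ^ d := by
  have hmono : Monotone ENNReal.ofReal := fun a b h => ENNReal.ofReal_le_ofReal h
  rw [← ENNReal.ofReal_one, ← hmono.map_min, ← ENNReal.ofReal_pow (by positivity)]
  congr 1
  rcases le_total r 1 with h1 | h1
  · rw [min_eq_right h1, min_eq_right (pow_le_one₀ hr h1)]
  · rw [min_eq_left h1, min_eq_left (one_le_pow₀ h1), one_pow]

lemma aux_tsum_min_one_eq_top {b : ℕ → ℝ≥0∞} (hb : ∀ j, b j ≠ ∞) {M : ℕ → ℕ}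
    (h : ∑' j, (M j : ℝ≥0∞) * b j = ∞) :
    ∑' j, (M j : ℝ≥0∞) * min 1 (b j) = ∞ := by
  by_contra hT
  have htend : Filter.Tendsto (fun j => (M j : ℝ≥0∞) * min 1 (b j)) Filter.atTop (nhds 0) :=
    ENNReal.tendsto_atTop_zero_of_tsum_ne_top hT
  obtain ⟨N, hN⟩ := (htend.eventually_lt_const (zero_lt_one (α := ℝ≥0∞))).exists_forall_of_atTop
  have key : ∀ j, (M j : ℝ≥0∞) * b j ≤
      (if j < N then (M j : ℝ≥0∞) * b j else 0) + (M j : ℝ≥0∞) * min 1 (b j) := by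
    intro j
    by_cases hj : j < N
    · simp only [hj, if_true]
      exact le_add_right (le_refl _)
    · simp only [hj, if_false, zero_add]
      push_neg at hj
      rcases Nat.eq_zero_or_pos (M j) with h0 | h0
      · simp [h0]
      · have h1 : (1:ℝ≥0∞) ≤ (M j : ℝ≥0∞) := by exact_mod_cast h0
        have h2 : min 1 (b j) < 1 :=
          lt_of_le_of_lt (le_mul_of_one_le_left zero_le h1) (hN j hj)
        have h3 : b j < 1 := by
          rcases min_lt_iff.1 h2 with h | h
          · exact absurd h (lt_irrefl _)
          · exact h
        rw [min_eq_right h3.le]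
  have hle : ∑' j, (M j : ℝ≥0∞) * b j ≤
      (∑' j, if j < N then (M j : ℝ≥0∞) * b j else 0) + ∑' j, (M j : ℝ≥0∞) * min 1 (b j) := by
    rw [← ENNReal.tsum_add]
    exact ENNReal.tsum_le_tsum key
  have hfin1 : (∑' j, if j < N then (M j : ℝ≥0∞) * b j else 0) ≠ ∞ := by
    rw [tsum_eq_sum (s := Finset.range N)
      (fun j hj => if_neg (fun h => hj (Finset.mem_range.2 h)))]
    refine (ENNReal.sum_lt_top.2 fun j _ => ?_).ne
    split_ifs
    · exact ENNReal.mul_lt_top (ENNReal.natCast_ne_top _).lt_top (hb j).lt_top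
    · simp
  rw [h] at hle
  exact (ENNReal.add_ne_top.2 ⟨hfin1, hT⟩) (top_le_iff.1 hle)

lemma aux_tsum_tail_eq_top {f : ℕ → ℝ≥0∞} (hf : ∀ j, f j ≠ ∞) (h : ∑' j, f j = ∞) (J₀ : ℕ) :
    ∑' j, (if J₀ ≤ j then f j else 0) = ∞ := by
  by_contra hT
  have key : ∀ j, f j ≤ (if j < J₀ then f j else 0) + (if J₀ ≤ j then f j else 0) := by
    intro j
    by_cases hj : j < J₀
    · simp [hj]
    · simp [hj, Nat.le_of_not_lt hj]
  have hle := (ENNReal.tsum_le_tsum key).trans_eq (ENNReal.tsum_add)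
  have hfin1 : (∑' j, if j < J₀ then f j else 0) ≠ ∞ := by
    rw [tsum_eq_sum (s := Finset.range J₀)
      (fun j hj => if_neg (fun hlt => hj (Finset.mem_range.2 hlt)))]
    refine (ENNReal.sum_lt_top.2 fun j _ => ?_).ne
    split_ifs
    · exact (hf j).lt_top
    · simp
  rw [h] at hle
  exact (ENNReal.add_ne_top.2 ⟨hfin1, hT⟩) (top_le_iff.1 hle)

lemma aux_sum_range_ite {f : ℕ → ℝ≥0∞} {J₀ J : ℕ} (hJ : J₀ ≤ J) :
    ∑ j ∈ Finset.range J, (if J₀ ≤ j then f j else 0) = ∑ j ∈ Finset.Ico J₀ J, f j := by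
  rw [← Finset.sum_subset (s₁ := Finset.Ico J₀ J) (s₂ := Finset.range J)
    (fun x hx => Finset.mem_range.2 (Finset.mem_Ico.1 hx).2)
    (fun x _ hx => if_neg (fun hle => hx (Finset.mem_Ico.2 ⟨hle, Finset.mem_range.1 ‹_›⟩)))]
  exact Finset.sum_congr rfl fun j hj => if_pos (Finset.mem_Ico.1 hj).1

lemma aux_infinite {α β : Type*} (S : Set (α × ℕ × β)) (h : ∀ N : ℕ, ∃ p ∈ S, N ≤ p.2.1) :
    S.Infinite := by
  intro hfin
  have himg : ((fun p : α × ℕ × β => p.2.1) '' S).Finite := hfin.image _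
  obtain ⟨M, hM⟩ := himg.bddAbove
  obtain ⟨p, hp, hple⟩ := h (M + 1)
  have h2 : p.2.1 ≤ M := hM ⟨p, hp, rfl⟩
  omega

variable (m) in
lemma aux_scaleOf_le {i : Fin (2 ^ d - 1)} {n j : ℕ}
    (h2 : n < ∑ j' ∈ Finset.range (j + 1), m i j') :
    scaleOf d m i n ≤ j := Nat.sInf_le h2

variable (m) in
lemma aux_scaleOf_mem {i : Fin (2 ^ d - 1)} {n : ℕ} (hmem : memN d m i n) :
    n < ∑ j' ∈ Finset.range (scaleOf d m i n + 1), m i j' := Nat.sInf_mem hmem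

variable (m) in
lemma aux_scaleOf_ge {i : Fin (2 ^ d - 1)} {n J : ℕ} (hmem : memN d m i n)
    (h1 : ∑ j' ∈ Finset.range J, m i j' ≤ n) :
    J ≤ scaleOf d m i n := by
  by_contra h
  push_neg at h
  have h2 := aux_scaleOf_mem m hmem
  have h3 : ∑ j' ∈ Finset.range (scaleOf d m i n + 1), m i j' ≤ ∑ j' ∈ Finset.range J, m i j' :=
    Finset.sum_le_sum_of_subset (Finset.range_subset_range.2 h)
  omega

variable (m) in
lemma aux_scaleOf_eq {i : Fin (2 ^ d - 1)} {n j : ℕ}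
    (h1 : ∑ j' ∈ Finset.range j, m i j' ≤ n)
    (h2 : n < ∑ j' ∈ Finset.range (j + 1), m i j') : scaleOf d m i n = j :=
  le_antisymm (aux_scaleOf_le m h2) (aux_scaleOf_ge m ⟨j, h2⟩ h1)

variable (m) in
lemma aux_memN_all {i : Fin (2 ^ d - 1)}
    (hS : ∀ n : ℕ, ∃ J, n < ∑ j' ∈ Finset.range J, m i j') (n : ℕ) :
    memN d m i n := by
  obtain ⟨J, hJ⟩ := hS n
  cases J with
  | zero => simp at hJ
  | succ j => exact ⟨j, hJ⟩

variable (m) in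
lemma aux_block_sum (i : Fin (2 ^ d - 1)) (a : ℕ → ℝ≥0∞) (J₀ : ℕ) :
    ∀ J, J₀ ≤ J →
      ∑ n ∈ Finset.Ico (∑ j' ∈ Finset.range J₀, m i j') (∑ j' ∈ Finset.range J, m i j'),
        a (scaleOf d m i n)
      = ∑ j ∈ Finset.Ico J₀ J, (m i j : ℝ≥0∞) * a j := by
  refine Nat.le_induction ?_ ?_
  · simp
  · intro J hJ ih
    have hmono : ∀ {A B : ℕ}, A ≤ B →
        (∑ j' ∈ Finset.range A, m i j') ≤ ∑ j' ∈ Finset.range B, m i j' :=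
      fun h => Finset.sum_le_sum_of_subset (Finset.range_subset_range.2 h)
    rw [← Finset.sum_Ico_consecutive _ (hmono hJ) (hmono (Nat.le_succ J)),
      Finset.sum_Ico_succ_top hJ, ih]
    congr 1
    have hconst : ∀ n ∈ Finset.Ico (∑ j' ∈ Finset.range J, m i j')
        (∑ j' ∈ Finset.range (J + 1), m i j'), a (scaleOf d m i n) = a J := by
      intro n hn
      rw [Finset.mem_Ico] at hn
      rw [aux_scaleOf_eq m hn.1 hn.2]
    rw [Finset.sum_congr rfl hconst, Finset.sum_const, Nat.card_Ico,
      Finset.sum_range_succ, nsmul_eq_mul]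
    simp

lemma aux_indep_preimage (hmeas : ∀ i n, Measurable (XX i n))
    (hindep : ProbabilityTheory.iIndepFun
      (fun (p : Fin (2 ^ d - 1) × ℕ) ω => XX p.1 p.2 ω) P)
    (i₀ : Fin (2 ^ d - 1)) (E : ℕ → Set (Torus d)) (hE : ∀ n, MeasurableSet (E n)) :
    ProbabilityTheory.iIndepSet (fun n => XX i₀ n ⁻¹' E n) P := by
  rw [ProbabilityTheory.iIndepSet_iff_iIndep]
  refine ProbabilityTheory.iIndepSets.iIndep
    (fun n => MeasurableSpace.generateFrom_le ?_) _ (fun n => IsPiSystem.singleton _)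
    (fun n => rfl) ?_
  · rintro t ht
    rw [Set.mem_singleton_iff] at ht
    subst ht
    exact (hmeas i₀ n) (hE n)
  · rw [ProbabilityTheory.iIndepSets_iff]
    intro s f hf
    have hinj : Set.InjOn (fun n : ℕ => ((i₀, n) : Fin (2 ^ d - 1) × ℕ)) ↑s :=
      fun a _ b _ h => by simpa using congrArg Prod.snd h
    have h2 := hindep.measure_inter_preimage_eq_mul (S := s.image (fun n => (i₀, n)))
      (sets := fun p => if p.1 = i₀ then E p.2 else Set.univ)
      (fun p _ => by
        by_cases h : p.1 = i₀ <;> simp only [h, if_true, if_false] <;>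
          [exact hE _; exact MeasurableSet.univ])
    rw [Finset.set_biInter_finset_image, Finset.prod_image hinj] at h2
    simp only [if_pos rfl] at h2
    have hfeq : ∀ n ∈ s, f n = XX i₀ n ⁻¹' E n := fun n hn => hf n hn
    calc P (⋂ n ∈ s, f n) = P (⋂ n ∈ s, XX i₀ n ⁻¹' E n) := by
          rw [Set.iInter₂_congr hfeq]
      _ = ∏ n ∈ s, P (XX i₀ n ⁻¹' E n) := h2
      _ = ∏ n ∈ s, P (f n) := Finset.prod_congr rfl fun n hn => by rw [hfeq n hn]

lemma aux_limsup_ae {B : ℕ → Set Ω} [IsProbabilityMeasure P]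
    (hmeas : ∀ n, MeasurableSet (B n)) (hind : ProbabilityTheory.iIndepSet B P)
    (hsum : ∑' n, P (B n) = ∞) :
    ∀ᵐ ω ∂P, ∀ N : ℕ, ∃ n, N ≤ n ∧ ω ∈ B n := by
  have h1 : P (limsup B atTop) = 1 := ProbabilityTheory.measure_limsup_eq_one hmeas hind hsum
  have h2 : limsup B atTop = ⋂ N : ℕ, ⋃ n : ℕ, ⋃ (_ : N ≤ n), B n := by
    rw [limsup_eq_iInf_iSup_of_nat]
    simp only [Set.iInf_eq_iInter, Set.iSup_eq_iUnion]
  rw [h2] at h1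
  have hm : MeasurableSet (⋂ N : ℕ, ⋃ n : ℕ, ⋃ (_ : N ≤ n), B n) :=
    MeasurableSet.iInter fun N =>
      MeasurableSet.iUnion fun n => MeasurableSet.iUnion fun _ => hmeas n
  have h3 : P (⋂ N : ℕ, ⋃ n : ℕ, ⋃ (_ : N ≤ n), B n)ᶜ = 0 :=
    (prob_compl_eq_zero_iff hm).2 h1
  filter_upwards [MeasureTheory.mem_ae_iff.2 h3] with ω hω
  simp only [Set.mem_iInter, Set.mem_iUnion] at hω
  exact fun N => by obtain ⟨n, hn, hB⟩ := hω N; exact ⟨n, hn, hB⟩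

end AuxHelpers


/-- **Lemma 15, second half.** If `Σ_{i,j} m_{i,j} φ(2^{-j}) = ∞` and `r^d = o(φ(r))`
as `r → 0`, then almost surely the set `L_{φ^{1/d}}` has full Lebesgue (Haar) measure
in `𝕋^d`. -/
theorem wavelet_Lset_full_measure
    (hM : IsRandomCubeModel d P m XX)
    (φ : ℝ → ℝ) (hφc : ContinuousOn φ (Ici (0:ℝ))) (hφm : MonotoneOn φ (Ici (0:ℝ)))
    (hφ0 : φ 0 = 0)
    (hsum : ∑' p : Fin (2 ^ d - 1) × ℕ,
      (m p.1 p.2 : ℝ≥0∞) * ENNReal.ofReal (φ ((2:ℝ) ^ (-(p.2 : ℤ)))) = ∞)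
    (hlittle : (fun r : ℝ => r ^ d) =o[𝓝[>] (0:ℝ)] φ) :
    ∀ᵐ ω ∂P,
      volume ((LsetT d m XX ω (fun r => φ r ^ (1 / (d : ℝ))))ᶜ) = 0 := by
  classical
  haveI : IsProbabilityMeasure P := hM.isProb
  have hd : 0 < d := hM.dpos
  have hφnn : ∀ ρ : ℝ, 0 ≤ ρ → 0 ≤ φ ρ := fun ρ hρ => by
    have := hφm (Set.mem_Ici.2 (le_refl (0:ℝ))) (Set.mem_Ici.2 hρ) hρ
    rw [hφ0] at this
    exact this
  obtain ⟨J₀, hJ₀⟩ := aux_littleo_extract d hd φ hφnn hlittle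
  have hρ1 : ∀ j : ℕ, (2:ℝ) ^ (-(j:ℤ)) ≤ 1 := fun j => by
    rw [zpow_neg, zpow_natCast]
    exact inv_le_one_of_one_le₀ (one_le_pow₀ one_le_two)
  -- choose a direction i₀ with divergent series
  have hsum' : ∃ i₀ : Fin (2^d-1),
      ∑' j : ℕ, (m i₀ j : ℝ≥0∞) * ENNReal.ofReal (φ ((2:ℝ)^(-(j:ℤ)))) = ∞ := by
    by_contra hcon
    push_neg at hcon
    rw [ENNReal.tsum_prod' (f := fun p : Fin (2^d-1) × ℕ =>
      (m p.1 p.2 : ℝ≥0∞) * ENNReal.ofReal (φ ((2:ℝ)^(-(p.2:ℤ))))), tsum_fintype] at hsum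
    exact (ENNReal.sum_lt_top.2 fun i _ => (hcon i).lt_top).ne hsum
  obtain ⟨i₀, hi₀⟩ := hsum'
  set b : ℕ → ℝ≥0∞ := fun j => ENNReal.ofReal (φ ((2:ℝ)^(-(j:ℤ)))) with hbdef
  have hbne : ∀ j, b j ≠ ∞ := fun j => ENNReal.ofReal_ne_top
  -- partial sums of m i₀ are unbounded
  have hSunb : ∀ n : ℕ, ∃ J, n < ∑ j' ∈ Finset.range J, m i₀ j' := by
    by_contra hB
    push_neg at hB
    obtain ⟨n, hn⟩ := hB
    have h1 : ∑' j, (m i₀ j : ℝ≥0∞) ≤ (n : ℝ≥0∞) := by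
      rw [ENNReal.tsum_eq_iSup_nat]
      refine iSup_le fun J => ?_
      rw [← Nat.cast_sum]
      exact_mod_cast hn J
    have h2 : ∑' j, (m i₀ j : ℝ≥0∞) * b j ≤ (∑' j, (m i₀ j : ℝ≥0∞)) * ENNReal.ofReal (φ 1) := by
      rw [← ENNReal.tsum_mul_right]
      refine ENNReal.tsum_le_tsum fun j => mul_le_mul_right ?_ _
      exact ENNReal.ofReal_le_ofReal
        (hφm (Set.mem_Ici.2 (by positivity)) (Set.mem_Ici.2 zero_le_one) (hρ1 j))
    rw [hi₀, top_le_iff] at h2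
    exact (ENNReal.mul_ne_top (ne_top_of_le_ne_top (ENNReal.natCast_ne_top n) h1)
      ENNReal.ofReal_ne_top) h2
  have hmemN : ∀ n, memN d m i₀ n := aux_memN_all m hSunb
  -- the measurable set A
  set A : Set (Ω × Torus d) := ⋂ N : ℕ, ⋃ i : Fin (2^d-1), ⋃ n : ℕ,
    ⋃ (_ : memN d m i n ∧ N ≤ scaleOf d m i n),
      {q : Ω × Torus d | dist q.2 (cubeBase d (scaleOf d m i n)
          (cubeIndex d (scaleOf d m i n) (XX i n q.1)))
        < φ ((2:ℝ) ^ (-(scaleOf d m i n : ℤ))) ^ (1 / (d:ℝ))} with hAdef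
  have hAmem : ∀ (ω : Ω) (x : Torus d), (ω, x) ∈ A ↔ ∀ N : ℕ,
      ∃ i n, memN d m i n ∧ N ≤ scaleOf d m i n ∧
        dist x (cubeBase d (scaleOf d m i n) (cubeIndex d (scaleOf d m i n) (XX i n ω)))
          < φ ((2:ℝ) ^ (-(scaleOf d m i n : ℤ))) ^ (1 / (d:ℝ)) := by
    intro ω x
    rw [hAdef]
    simp only [Set.mem_iInter, Set.mem_iUnion, Set.mem_setOf_eq, exists_prop]
    exact forall_congr' fun N => exists_congr fun i => exists_congr fun n => by tauto
  have hAmeas : MeasurableSet A := by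
    rw [hAdef]
    refine MeasurableSet.iInter fun N => MeasurableSet.iUnion fun i =>
      MeasurableSet.iUnion fun n => MeasurableSet.iUnion fun _ => ?_
    have hmble : Measurable fun q : Ω × Torus d =>
        dist q.2 (cubeBase d (scaleOf d m i n) (cubeIndex d (scaleOf d m i n) (XX i n q.1))) :=
      measurable_snd.dist
        ((aux_measurable_cubemap d (scaleOf d m i n)).comp ((hM.meas i n).comp measurable_fst))
    exact hmble measurableSet_Iio
  -- LsetT in terms of A
  have hLiff : ∀ (ω : Ω) (x : Torus d),
      x ∈ LsetT d m XX ω (fun r => φ r ^ (1 / (d:ℝ))) ↔ (ω, x) ∈ A := by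
    intro ω x
    rw [hAmem]
    simp only [LsetT, Set.mem_setOf_eq]
    constructor
    · intro hinf N
      have hfinN : {p : Fin (2^d-1) × ℕ × (Fin d → ℤ) |
          p ∈ Mset d m XX ω ∧ p.2.1 < N}.Finite := by
        set BN : ℕ := ∑ i : Fin (2^d-1), ∑ j' ∈ Finset.range N, m i j' with hBN
        refine Set.Finite.subset (Set.Finite.image
          (f := fun q : Fin (2^d-1) × ℕ => ((q.1, scaleOf d m q.1 q.2,
            cubeIndex d (scaleOf d m q.1 q.2) (XX q.1 q.2 ω)) : Fin (2^d-1) × ℕ × (Fin d → ℤ)))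
          (Set.Finite.prod Set.finite_univ (Set.finite_Iio BN))) ?_
        rintro ⟨i, j, k⟩ ⟨⟨n, hmem, hj, hk⟩, hjN⟩
        simp only at hmem hj hk hjN
        refine ⟨(i, n), ⟨Set.mem_univ _, ?_⟩, ?_⟩
        · have h1 := aux_scaleOf_mem m hmem
          have h2 : ∑ j' ∈ Finset.range (scaleOf d m i n + 1), m i j'
              ≤ ∑ j' ∈ Finset.range N, m i j' := by
            refine Finset.sum_le_sum_of_subset (Finset.range_subset_range.2 ?_)
            omega
          have h3 : ∑ j' ∈ Finset.range N, m i j' ≤ BN := by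
            rw [hBN]
            exact Finset.single_le_sum (f := fun i : Fin (2^d-1) => ∑ j' ∈ Finset.range N, m i j')
              (fun _ _ => Nat.zero_le _) (Finset.mem_univ i)
          exact Set.mem_Iio.2 (by omega)
        · simp [hj, hk]
      have hex : ∃ p, (p ∈ Mset d m XX ω ∧
          dist x (cubeBase d p.2.1 p.2.2) < φ ((2:ℝ) ^ (-(p.2.1:ℤ))) ^ (1 / (d:ℝ))) ∧
          N ≤ p.2.1 := by
        by_contra hno
        push_neg at hno
        refine hinf (hfinN.subset ?_)
        rintro p ⟨hp1, hp2⟩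
        exact ⟨hp1, Nat.lt_of_not_le fun hle => absurd (hno p ⟨hp1, hp2⟩) (not_lt.2 hle)⟩
      obtain ⟨p, ⟨⟨n, hmem, hj, hk⟩, hdist⟩, hN⟩ := hex
      refine ⟨p.1, n, hmem, ?_, ?_⟩
      · omega
      · rw [← hk, ← hj]
        exact hdist
    · intro hQ
      refine aux_infinite _ fun N => ?_
      obtain ⟨i, n, hmem, hscale, hdist⟩ := hQ N
      exact ⟨(i, scaleOf d m i n, cubeIndex d (scaleOf d m i n) (XX i n ω)),
        ⟨⟨n, hmem, rfl, rfl⟩, hdist⟩, hscale⟩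
  -- for each x, almost surely (ω, x) ∈ A
  have haeQ : ∀ x : Torus d, ∀ᵐ ω ∂P, (ω, x) ∈ A := by
    intro x
    set E : ℕ → Set (Torus d) := fun n =>
      {y : Torus d | dist x (cubeBase d (scaleOf d m i₀ n) (cubeIndex d (scaleOf d m i₀ n) y))
        < φ ((2:ℝ) ^ (-(scaleOf d m i₀ n : ℤ))) ^ (1 / (d:ℝ))} with hEdef
    have hEmeas : ∀ n, MeasurableSet (E n) := by
      intro n
      have hmble : Measurable fun y : Torus d =>
          dist x (cubeBase d (scaleOf d m i₀ n) (cubeIndex d (scaleOf d m i₀ n) y)) :=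
        measurable_const.dist (aux_measurable_cubemap d (scaleOf d m i₀ n))
      exact hmble measurableSet_Iio
    set B : ℕ → Set Ω := fun n => XX i₀ n ⁻¹' E n with hBdef
    have hBmeas : ∀ n, MeasurableSet (B n) := fun n => (hM.meas i₀ n) (hEmeas n)
    have hBP : ∀ n, P (B n) = volume (E n) := fun n => by
      rw [hBdef, ← hM.law i₀ n, Measure.map_apply (hM.meas i₀ n) (hEmeas n)]
    have hBlow : ∀ n : ℕ, J₀ ≤ scaleOf d m i₀ n → min 1 (b (scaleOf d m i₀ n)) ≤ P (B n) := by
      intro n hn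
      obtain ⟨hφpos, h4, hrd⟩ := hJ₀ (scaleOf d m i₀ n) hn
      have hrpos : 0 < φ ((2:ℝ) ^ (-(scaleOf d m i₀ n : ℤ))) ^ (1 / (d:ℝ)) :=
        Real.rpow_pos_of_pos hφpos _
      have hvol := aux_volume_event_ge d x (scaleOf d m i₀ n)
        (φ ((2:ℝ) ^ (-(scaleOf d m i₀ n : ℤ))) ^ (1 / (d:ℝ))) hrpos h4
      rw [hBP n, hbdef]
      calc min 1 (ENNReal.ofReal (φ ((2:ℝ) ^ (-(scaleOf d m i₀ n : ℤ)))))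
          = ENNReal.ofReal (min 1 (φ ((2:ℝ) ^ (-(scaleOf d m i₀ n : ℤ))) ^ (1 / (d:ℝ)))) ^ d := by
            rw [← aux_min_one_ofReal d _ hrpos.le, hrd]
        _ ≤ volume (E n) := hvol
    -- divergence of the sum of probabilities
    have hdiv : ∑' n, P (B n) = ∞ := by
      have hane : ∀ j, (m i₀ j : ℝ≥0∞) * min 1 (b j) ≠ ∞ := fun j =>
        ENNReal.mul_ne_top (ENNReal.natCast_ne_top _)
          (((min_le_left _ _).trans_lt ENNReal.one_lt_top).ne)
      have h2 : ∑' j, (m i₀ j : ℝ≥0∞) * min 1 (b j) = ∞ := aux_tsum_min_one_eq_top hbne hi₀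
      have h3 : ∑' j, (if J₀ ≤ j then (m i₀ j : ℝ≥0∞) * min 1 (b j) else 0) = ∞ :=
        aux_tsum_tail_eq_top hane h2 J₀
      rw [ENNReal.tsum_eq_iSup_nat] at h3
      rw [eq_top_iff, ← h3]
      refine iSup_le fun J => ?_
      rcases le_total J J₀ with hJ | hJ
      · have hzero : ∀ j ∈ Finset.range J,
            (if J₀ ≤ j then (m i₀ j : ℝ≥0∞) * min 1 (b j) else 0) = 0 := fun j hj =>
          if_neg (by have := Finset.mem_range.1 hj; omega)
        rw [Finset.sum_congr rfl hzero]
        simp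
      · rw [aux_sum_range_ite hJ, ← aux_block_sum m i₀ (fun j => min 1 (b j)) J₀ J hJ]
        refine le_trans (Finset.sum_le_sum ?_) (ENNReal.sum_le_tsum _)
        intro n hn
        rw [Finset.mem_Ico] at hn
        exact hBlow n (aux_scaleOf_ge m (hmemN n) hn.1)
    -- second Borel–Cantelli
    have hind : ProbabilityTheory.iIndepSet B P :=
      aux_indep_preimage hM.meas hM.indep i₀ E hEmeas
    filter_upwards [aux_limsup_ae hBmeas hind hdiv] with ω hω
    rw [hAmem]
    intro N
    obtain ⟨n, hn, hBn⟩ := hω (∑ j' ∈ Finset.range N, m i₀ j')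
    refine ⟨i₀, n, hmemN n, aux_scaleOf_ge m (hmemN n) hn, ?_⟩
    rw [hBdef] at hBn
    simp only [Set.mem_preimage, hEdef, Set.mem_setOf_eq] at hBn
    exact hBn
  -- Fubini argument
  have hcompl : MeasurableSet Aᶜ := hAmeas.compl
  have hslice : ∀ x : Torus d, P ((fun ω => (ω, x)) ⁻¹' Aᶜ) = 0 := by
    intro x
    have h := haeQ x
    rw [MeasureTheory.ae_iff] at h
    exact h
  have hprod : (P.prod (volume : Measure (Torus d))) Aᶜ = 0 := by
    rw [Measure.prod_apply_symm hcompl]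
    simp only [hslice]
    exact lintegral_zero
  rw [Measure.prod_apply hcompl] at hprod
  have hmeasfun : Measurable fun ω => (volume : Measure (Torus d)) (Prod.mk ω ⁻¹' Aᶜ) :=
    measurable_measure_prodMk_left hcompl
  filter_upwards [(lintegral_eq_zero_iff hmeasfun).1 hprod] with ω hω
  have hset : (LsetT d m XX ω (fun r => φ r ^ (1 / (d:ℝ))))ᶜ = Prod.mk ω ⁻¹' Aᶜ := by
    ext x
    simp only [Set.mem_compl_iff, Set.mem_preimage, hLiff ω x]
  rw [hset]
  exact hω

end WaveletFractal
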